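/- In the setting of the context, let k ∈ ℕ. Then: (1) there exist C, c > 0 such that for every integer n ≥ 1 and every real x ∈ [0, n/2], ∫_{Γ_d(η)} |τ|^k exp( n Re(τ) + x (−Re(τ) + A_R Re(τ)^{2μ} − A_I Im(τ)^{2μ}) ) |dτ| ≤ C e^{−c n}; and (2) there exist C, c > 0 such that for every integer n ≥ 1 and every real x ≥ 2n, ∫_{Γ_in(η)} |τ|^k exp( n Re(τ) + x (−Re(τ) + A_R Re(τ)^{2μ} − A_I Im(τ)^{2μ}) ) |dτ| ≤ C e^{−c n}. -/

import Mathlib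

open MeasureTheory

/-- The integrand `|τ|^k exp( n Re(τ) + x (−Re(τ) + A_R Re(τ)^{2μ} − A_I Im(τ)^{2μ}) )`. -/
noncomputable def g16 (μ k : ℕ) (A_R A_I : ℝ) (n : ℕ) (x : ℝ) (τ : ℂ) : ℝ :=
  ‖τ‖ ^ k *
    Real.exp ((n : ℝ) * τ.re + x * (-τ.re + A_R * τ.re ^ (2 * μ) - A_I * τ.im ^ (2 * μ)))

lemma int_le_const16 (a b B : ℝ) (hab : a ≤ b) (f : ℝ → ℝ)
    (hf : Continuous f) (hB : ∀ t ∈ Set.Icc a b, f t ≤ B) :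
    (∫ t in a..b, f t) ≤ (b - a) * B := by
  have h1 : (∫ t in a..b, f t) ≤ ∫ _t in a..b, B :=
    intervalIntegral.integral_mono_on hab (hf.intervalIntegrable a b)
      intervalIntegrable_const hB
  simpa [smul_eq_mul] using h1

lemma g16_cont (μ k : ℕ) (A_R A_I : ℝ) (n : ℕ) (x : ℝ) (f : ℝ → ℂ) (hf : Continuous f) :
    Continuous fun t : ℝ => g16 μ k A_R A_I n x (f t) := by
  unfold g16
  have h := continuous_norm.comp hf
  fun_prop

/-- Pointwise bound for `g16` from bounds on `|τ|` and on the exponent. -/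
lemma g16_le (μ k : ℕ) (A_R A_I : ℝ) (n : ℕ) (x : ℝ) (τ : ℂ) (K E : ℝ)
    (hK : ‖τ‖ ≤ K)
    (hE : (n : ℝ) * τ.re + x * (-τ.re + A_R * τ.re ^ (2 * μ) - A_I * τ.im ^ (2 * μ)) ≤ E) :
    g16 μ k A_R A_I n x τ ≤ K ^ k * Real.exp E := by
  unfold g16
  exact mul_le_mul (pow_le_pow_left₀ (norm_nonneg τ) hK k)
    (Real.exp_le_exp.2 hE) (Real.exp_pos _).le (pow_nonneg ((norm_nonneg τ).trans hK) k)

theorem stmt16 (μ : ℕ) (hμ : 1 ≤ μ) (A_R A_I : ℝ) (hAR : 0 < A_R) (hAI : 0 < A_I)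
    (ε η : ℝ) (hε0 : 0 < ε)
    (hεsmall : ε < (1 / (2 * (μ : ℝ) * A_R)) ^ ((1 : ℝ) / (2 * (μ : ℝ) - 1)))
    (hη0 : 0 < η) (hηε : η < ε)
    (hη1 : A_R * η ^ (2 * μ) < η / 2)
    (hη2 : η + A_R * η ^ (2 * μ) - A_I / 2 * Real.sqrt (ε ^ 2 - η ^ 2) ^ (2 * μ) < 0)
    (k : ℕ) :
    (∃ C c : ℝ, 0 < C ∧ 0 < c ∧ ∀ n : ℕ, 1 ≤ n → ∀ x : ℝ, 0 ≤ x → x ≤ (n : ℝ) / 2 →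
      (∫ t in (-Real.sqrt (ε ^ 2 - η ^ 2))..(Real.sqrt (ε ^ 2 - η ^ 2)),
        g16 μ k A_R A_I n x (-(η : ℂ) + (t : ℂ) * Complex.I)) ≤ C * Real.exp (-c * n)) ∧
    (∃ C c : ℝ, 0 < C ∧ 0 < c ∧ ∀ n : ℕ, 1 ≤ n → ∀ x : ℝ, 2 * (n : ℝ) ≤ x →
      (∫ t in (-η)..η,
        g16 μ k A_R A_I n x ((t : ℂ) - (Real.sqrt (ε ^ 2 - η ^ 2) : ℂ) * Complex.I)) +
      (∫ t in (-Real.sqrt (ε ^ 2 - η ^ 2))..(Real.sqrt (ε ^ 2 - η ^ 2)),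
        g16 μ k A_R A_I n x ((η : ℂ) + (t : ℂ) * Complex.I)) +
      (∫ t in (-η)..η,
        g16 μ k A_R A_I n x ((t : ℂ) + (Real.sqrt (ε ^ 2 - η ^ 2) : ℂ) * Complex.I)) ≤
        C * Real.exp (-c * n)) := by
  clear hεsmall
  set r := Real.sqrt (ε ^ 2 - η ^ 2) with hr_def
  have hε2 : 0 < ε ^ 2 - η ^ 2 := by nlinarith
  have hr0 : 0 < r := Real.sqrt_pos.2 hε2
  have hrr : -r ≤ r := by linarith
  have hηη : -η ≤ η := by linarith
  have hη2μ : 0 < η ^ (2 * μ) := by positivity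
  have hr2μ : 0 < r ^ (2 * μ) := by positivity
  have hKpos : (0:ℝ) < η + r := by linarith
  constructor
  · -- part 1
    refine ⟨2 * r * (η + r) ^ k, η / 4, by positivity, by positivity, ?_⟩
    intro n hn x hx0 hx
    have hn0 : (0:ℝ) ≤ (n:ℝ) := Nat.cast_nonneg n
    have hB : ∀ t ∈ Set.Icc (-r) r,
        g16 μ k A_R A_I n x (-(η : ℂ) + (t : ℂ) * Complex.I)
          ≤ (η + r) ^ k * Real.exp (-(η / 4) * n) := by
      intro t ht
      obtain ⟨ht1, ht2⟩ := ht
      have hre : ((-(η:ℂ) + (t:ℂ) * Complex.I)).re = -η := by simp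
      have him : ((-(η:ℂ) + (t:ℂ) * Complex.I)).im = t := by simp
      apply g16_le
      · refine (Complex.norm_le_abs_re_add_abs_im _).trans ?_
        rw [hre, him, abs_neg, abs_of_pos hη0]
        have : |t| ≤ r := abs_le.2 ⟨ht1, ht2⟩
        linarith
      · rw [hre, him]
        have hneg : (-η:ℝ) ^ (2 * μ) = η ^ (2 * μ) := Even.neg_pow (even_two_mul μ) η
        rw [hneg]
        have ht2μ : 0 ≤ t ^ (2 * μ) := by rw [pow_mul]; positivity
        have k1 : x * (η + A_R * η ^ (2 * μ)) ≤ ((n:ℝ) / 2) * (η + A_R * η ^ (2 * μ)) :=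
          mul_le_mul_of_nonneg_right hx (by nlinarith)
        linarith [mul_nonneg hx0 (mul_nonneg hAI.le ht2μ),
          mul_le_mul_of_nonneg_left hη1.le (show (0:ℝ) ≤ (n:ℝ)/2 by linarith)]
    have h := int_le_const16 (-r) r _ hrr _
      (g16_cont μ k A_R A_I n x _ (by fun_prop)) hB
    calc (∫ t in (-r)..r, g16 μ k A_R A_I n x (-(η : ℂ) + (t : ℂ) * Complex.I))
        ≤ (r - (-r)) * ((η + r) ^ k * Real.exp (-(η / 4) * n)) := h
      _ = 2 * r * (η + r) ^ k * Real.exp (-(η / 4) * n) := by ring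
  · -- part 2
    have hc1 : (0:ℝ) < A_I / 2 * r ^ (2 * μ) := by positivity
    have hc2 : (0:ℝ) < η - 2 * A_R * η ^ (2 * μ) := by linarith
    set c := min (A_I / 2 * r ^ (2 * μ)) (η - 2 * A_R * η ^ (2 * μ)) with hc_def
    have hc0 : 0 < c := lt_min hc1 hc2
    refine ⟨(4 * η + 2 * r) * (η + r) ^ k, c, by positivity, hc0, ?_⟩
    intro n hn x hx
    have hn1 : (1:ℝ) ≤ (n:ℝ) := by exact_mod_cast hn
    have hn0 : (0:ℝ) ≤ (n:ℝ) := by linarith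
    have hx0 : (0:ℝ) ≤ x := by linarith
    -- horizontal segments : exponent bound
    have hhor : ∀ s t : ℝ, s ^ (2 * μ) = r ^ (2 * μ) → t ∈ Set.Icc (-η) η →
        (n : ℝ) * t + x * (-t + A_R * t ^ (2 * μ) - A_I * s ^ (2 * μ)) ≤ -c * n := by
      intro s t hs ht
      obtain ⟨ht1, ht2⟩ := ht
      rw [hs]
      have ht2μ : t ^ (2 * μ) ≤ η ^ (2 * μ) := by
        rw [pow_mul, pow_mul]
        exact pow_le_pow_left₀ (sq_nonneg t) (by nlinarith) μ
      have hone : -t + A_R * t ^ (2 * μ) - A_I * r ^ (2 * μ) ≤ -(A_I / 2) * r ^ (2 * μ) := by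
        linarith [mul_le_mul_of_nonneg_left ht2μ hAR.le]
      have honeneg : -(A_I / 2) * r ^ (2 * μ) ≤ 0 := by
        have := mul_nonneg (by linarith : (0:ℝ) ≤ A_I / 2) hr2μ.le
        linarith
      have e1 : x * (-t + A_R * t ^ (2 * μ) - A_I * r ^ (2 * μ))
          ≤ (2 * (n:ℝ)) * (-(A_I / 2) * r ^ (2 * μ)) := by
        calc x * (-t + A_R * t ^ (2 * μ) - A_I * r ^ (2 * μ))
            ≤ x * (-(A_I / 2) * r ^ (2 * μ)) := mul_le_mul_of_nonneg_left hone hx0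
          _ ≤ (2 * (n:ℝ)) * (-(A_I / 2) * r ^ (2 * μ)) :=
              mul_le_mul_of_nonpos_right hx honeneg
      have e2 : (n:ℝ) * t ≤ (n:ℝ) * η := mul_le_mul_of_nonneg_left ht2 hn0
      have key : η - A_I * r ^ (2 * μ) + c ≤ 0 := by
        have h1 := min_le_left (A_I / 2 * r ^ (2 * μ)) (η - 2 * A_R * η ^ (2 * μ))
        have h2 := mul_pos hAR hη2μ
        linarith
      linarith [e1, e2, mul_le_mul_of_nonneg_left key hn0]
    -- vertical segment : exponent bound
    have hver : ∀ t : ℝ,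
        (n : ℝ) * η + x * (-η + A_R * η ^ (2 * μ) - A_I * t ^ (2 * μ)) ≤ -c * n := by
      intro t
      have ht2μ : 0 ≤ t ^ (2 * μ) := by rw [pow_mul]; positivity
      have hone : -η + A_R * η ^ (2 * μ) - A_I * t ^ (2 * μ) ≤ -η + A_R * η ^ (2 * μ) := by
        linarith [mul_nonneg hAI.le ht2μ]
      have honeneg : -η + A_R * η ^ (2 * μ) ≤ 0 := by linarith
      have e1 : x * (-η + A_R * η ^ (2 * μ) - A_I * t ^ (2 * μ))
          ≤ (2 * (n:ℝ)) * (-η + A_R * η ^ (2 * μ)) := by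
        calc x * (-η + A_R * η ^ (2 * μ) - A_I * t ^ (2 * μ))
            ≤ x * (-η + A_R * η ^ (2 * μ)) := mul_le_mul_of_nonneg_left hone hx0
          _ ≤ (2 * (n:ℝ)) * (-η + A_R * η ^ (2 * μ)) :=
              mul_le_mul_of_nonpos_right hx honeneg
      have key : η + 2 * (-η + A_R * η ^ (2 * μ)) + c ≤ 0 := by
        have := min_le_right (A_I / 2 * r ^ (2 * μ)) (η - 2 * A_R * η ^ (2 * μ))
        linarith
      linarith [e1, mul_le_mul_of_nonneg_left key hn0]
    -- the three integral bounds
    have habsK : ∀ t : ℝ, t ∈ Set.Icc (-η) η → ∀ s : ℝ, |s| ≤ r →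
        ‖(t:ℂ) + (s:ℂ) * Complex.I‖ ≤ η + r := by
      intro t ht s hs
      obtain ⟨ht1, ht2⟩ := ht
      refine (Complex.norm_le_abs_re_add_abs_im _).trans ?_
      have hre : (((t:ℂ) + (s:ℂ) * Complex.I)).re = t := by simp
      have him : (((t:ℂ) + (s:ℂ) * Complex.I)).im = s := by simp
      rw [hre, him]
      have : |t| ≤ η := abs_le.2 ⟨ht1, ht2⟩
      linarith
    have hrevenpow : (-r:ℝ) ^ (2 * μ) = r ^ (2 * μ) := Even.neg_pow (even_two_mul μ) r
    have hI1 : (∫ t in (-η)..η, g16 μ k A_R A_I n x ((t : ℂ) - (r : ℂ) * Complex.I))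
        ≤ (η - (-η)) * ((η + r) ^ k * Real.exp (-c * n)) := by
      apply int_le_const16 _ _ _ hηη _ (g16_cont μ k A_R A_I n x _ (by fun_prop))
      intro t ht
      apply g16_le
      · have : ((t:ℂ) - (r:ℂ) * Complex.I) = ((t:ℂ) + ((-r:ℝ):ℂ) * Complex.I) := by
          push_cast; ring
        rw [this]
        exact habsK t ht (-r) (by rw [abs_neg, abs_of_pos hr0])
      · have hre : (((t:ℂ) - (r:ℂ) * Complex.I)).re = t := by simp
        have him : (((t:ℂ) - (r:ℂ) * Complex.I)).im = -r := by simp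
        rw [hre, him, hrevenpow]
        exact hhor r t rfl ht
    have hI3 : (∫ t in (-η)..η, g16 μ k A_R A_I n x ((t : ℂ) + (r : ℂ) * Complex.I))
        ≤ (η - (-η)) * ((η + r) ^ k * Real.exp (-c * n)) := by
      apply int_le_const16 _ _ _ hηη _ (g16_cont μ k A_R A_I n x _ (by fun_prop))
      intro t ht
      apply g16_le
      · exact habsK t ht r (by rw [abs_of_pos hr0])
      · have hre : (((t:ℂ) + (r:ℂ) * Complex.I)).re = t := by simp
        have him : (((t:ℂ) + (r:ℂ) * Complex.I)).im = r := by simp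
        rw [hre, him]
        exact hhor r t rfl ht
    have hI2 : (∫ t in (-r)..r, g16 μ k A_R A_I n x ((η : ℂ) + (t : ℂ) * Complex.I))
        ≤ (r - (-r)) * ((η + r) ^ k * Real.exp (-c * n)) := by
      apply int_le_const16 _ _ _ hrr _ (g16_cont μ k A_R A_I n x _ (by fun_prop))
      intro t ht
      obtain ⟨ht1, ht2⟩ := ht
      apply g16_le
      · refine (Complex.norm_le_abs_re_add_abs_im _).trans ?_
        have hre : (((η:ℂ) + (t:ℂ) * Complex.I)).re = η := by simp
        have him : (((η:ℂ) + (t:ℂ) * Complex.I)).im = t := by simp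
        rw [hre, him, abs_of_pos hη0]
        have : |t| ≤ r := abs_le.2 ⟨ht1, ht2⟩
        linarith
      · have hre : (((η:ℂ) + (t:ℂ) * Complex.I)).re = η := by simp
        have him : (((η:ℂ) + (t:ℂ) * Complex.I)).im = t := by simp
        rw [hre, him]
        exact hver t
    have hfin : (η - (-η)) * ((η + r) ^ k * Real.exp (-c * n))
        + (r - (-r)) * ((η + r) ^ k * Real.exp (-c * n))
        + (η - (-η)) * ((η + r) ^ k * Real.exp (-c * n))
        = (4 * η + 2 * r) * (η + r) ^ k * Real.exp (-c * n) := by ring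
    linarith [hI1, hI2, hI3]
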